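/- With $0<|x|<1$, $r>1$, $s=r+1$, and $f_{i,j}(z)$ as in the $\mathcal{W}_{q,t}(\mathfrak{sl}(2|1))$ setting, for integers $i,j \geq 1$ and $k$ with $i-k \geq 1$ and $j+k \geq 1$, the identity $f_{1,i}(z)\, f_{1,j}(x^{i-j-2k} z) = f_{1,i-k}(x^{-k} z)\, f_{1,j+k}(x^{i-j-k} z)$ holds as formal power series in $z$. -/

import Mathlib

/-- The q-integer with real index: `[a]_x = (x^a - x^{-a})/(x - x⁻¹)`. -/
noncomputable def qint (x a : ℝ) : ℝ := (x ^ a - x ^ (-a)) / (x - x⁻¹)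

open Real

lemma hw_pos {x : ℝ} (h0 : 0 < x) (h1 : x < 1) : 0 < x⁻¹ - x := by
  have h := mul_inv_cancel₀ h0.ne'
  nlinarith [inv_pos.mpr h0]

lemma qint_pos {x : ℝ} (h0 : 0 < x) (h1 : x < 1) {a : ℝ} (ha : 0 < a) : 0 < qint x a := by
  unfold qint
  have h2 : x ^ a < 1 := rpow_lt_one h0.le h1 ha
  have h3 : 1 < x ^ (-a) := by
    rw [rpow_neg h0.le]
    exact one_lt_inv_iff₀.mpr ⟨rpow_pos_of_pos h0 a, h2⟩
  have h4 : x - x⁻¹ < 0 := by linarith [hw_pos h0 h1]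
  exact div_pos_of_neg_of_neg (by linarith) h4

lemma qint_abs_le {x : ℝ} (h0 : 0 < x) (h1 : x < 1) (a : ℝ) :
    |qint x a| ≤ 2 * x ^ (-|a|) / (x⁻¹ - x) := by
  have hw := hw_pos h0 h1
  unfold qint
  rw [abs_div, abs_of_neg (show x - x⁻¹ < 0 by linarith)]
  have h2 : |x ^ a - x ^ (-a)| ≤ 2 * x ^ (-|a|) := by
    have e1 : x ^ a ≤ x ^ (-|a|) := rpow_le_rpow_of_exponent_ge h0 h1.le (neg_abs_le a)
    have e2 : x ^ (-a) ≤ x ^ (-|a|) := rpow_le_rpow_of_exponent_ge h0 h1.le (by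
      have := neg_abs_le a
      have := le_abs_self a
      linarith)
    have p1 : (0:ℝ) < x ^ a := rpow_pos_of_pos h0 a
    have p2 : (0:ℝ) < x ^ (-a) := rpow_pos_of_pos h0 (-a)
    rw [abs_sub_le_iff]
    constructor <;> linarith
  have : -(x - x⁻¹) = x⁻¹ - x := by ring
  rw [this]
  exact div_le_div_of_nonneg_right h2 hw.le

lemma qint_lower {x : ℝ} (h0 : 0 < x) (h1 : x < 1) {a : ℝ} (ha : 1 ≤ a) :
    x ^ (-a) * (1 - x ^ 2) / (x⁻¹ - x) ≤ qint x a := by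
  have hw := hw_pos h0 h1
  have hq : qint x a = (x ^ (-a) - x ^ a) / (x⁻¹ - x) := by
    unfold qint
    rw [show x - x⁻¹ = -(x⁻¹ - x) by ring, div_neg, ← neg_div, neg_sub]
  rw [hq]
  apply div_le_div_of_nonneg_right _ hw.le
  have h2 : x ^ a ≤ x ^ (2 - a) := rpow_le_rpow_of_exponent_ge h0 h1.le (by linarith)
  have h3 : x ^ (2 - a) = x ^ 2 * x ^ (-a) := by
    rw [show x ^ (2:ℕ) = x ^ ((2:ℕ):ℝ) by rw [rpow_natCast], ← rpow_add h0]
    push_cast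
    ring_nf
  nlinarith [rpow_pos_of_pos h0 (-a)]

lemma qint_lower_pos {x : ℝ} (h0 : 0 < x) (h1 : x < 1) {a : ℝ} (ha : 1 ≤ a) :
    0 < x ^ (-a) * (1 - x ^ 2) / (x⁻¹ - x) := by
  have hw := hw_pos h0 h1
  have hx2' : 0 < 1 - x ^ 2 := by nlinarith
  exact div_pos (mul_pos (rpow_pos_of_pos h0 (-a)) hx2') hw

/-- The simplified coefficient of `z^(m+1)/(m+1)` in `-log f_{1,t}`. -/
noncomputable def cc (x r : ℝ) (t : ℕ) (m : ℕ) : ℝ :=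
  qint x ((r - 1) * (m + 1)) * qint x (r * (m + 1)) *
    qint x ((r + 1 - (t : ℝ)) * (m + 1)) / qint x ((r + 1) * (m + 1)) * (x - x⁻¹) ^ 2

/-- The structure function
`f_{i,j}(z) = exp(-∑_{m≥1} (1/m) [(r-1)m][rm][min(i,j)m][(s-max(i,j))m]/([m][sm]) (x-x⁻¹)² z^m)`
with `s = r+1`, as a function of `z` (convergent for small `‖z‖`). -/
noncomputable def ff (x r : ℝ) (i j : ℕ) (z : ℂ) : ℂ :=
  Complex.exp (-∑' m : ℕ,
    ((qint x ((r - 1) * (m + 1)) * qint x (r * (m + 1)) * qint x ((min i j : ℝ) * (m + 1)) *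
        qint x ((r + 1 - (max i j : ℝ)) * (m + 1)) /
        (qint x ((m : ℝ) + 1) * qint x ((r + 1) * (m + 1))) * (x - x⁻¹) ^ 2 : ℝ) : ℂ)
      * z ^ (m + 1) / ((m : ℂ) + 1))

/-- The rational function `Δ_i(z) = (1-x^{2r-i}z)(1-x^{-2r+i}z)/((1-x^i z)(1-x^{-i}z))`. -/
noncomputable def Dlt (x r : ℝ) (i : ℕ) (z : ℂ) : ℂ :=
  ((1 - ((x ^ (2 * r - (i : ℝ)) : ℝ) : ℂ) * z) * (1 - ((x ^ ((i : ℝ) - 2 * r) : ℝ) : ℂ) * z)) /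
    ((1 - ((x ^ (i : ℝ) : ℝ) : ℂ) * z) * (1 - ((x ^ (-(i : ℝ)) : ℝ) : ℂ) * z))

lemma ff_eq {x r : ℝ} (h0 : 0 < x) (h1 : x < 1) (hr : 1 < r) (t : ℕ) (ht : 1 ≤ t) (z : ℂ) :
    ff x r 1 t z
      = Complex.exp (-∑' m : ℕ, ((cc x r t m : ℝ) : ℂ) * z ^ (m + 1) / ((m : ℂ) + 1)) := by
  unfold ff
  congr 2
  apply tsum_congr
  intro m
  congr 3
  have hmn : (0:ℝ) < (m:ℝ) + 1 := by positivity
  have hq1 : qint x ((m:ℝ) + 1) ≠ 0 := (qint_pos h0 h1 hmn).ne'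
  have hq2 : qint x ((r + 1) * ((m:ℝ) + 1)) ≠ 0 :=
    (qint_pos h0 h1 (by nlinarith)).ne'
  have hmin : (min ((1:ℕ):ℝ) ((t:ℕ):ℝ)) = 1 := by
    rw [min_eq_left]
    · norm_num
    · push_cast
      exact_mod_cast ht
  have hmax : (max ((1:ℕ):ℝ) ((t:ℕ):ℝ)) = (t:ℝ) := by
    rw [max_eq_right]
    exact_mod_cast ht
  rw [hmin, hmax]
  unfold cc
  rw [one_mul]
  field_simp

lemma qint_key {x : ℝ} (h0 : 0 < x) (p q κ : ℝ) :
    qint x p + qint x q * x ^ (q - p - 2*κ)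
      = qint x (p + κ) * x ^ (-κ) + qint x (q - κ) * x ^ (q - p - κ) := by
  unfold qint
  rw [div_mul_eq_mul_div, div_mul_eq_mul_div, div_mul_eq_mul_div, ← add_div,
    ← add_div]
  congr 1
  rw [sub_mul, sub_mul, sub_mul, ← rpow_add h0, ← rpow_add h0, ← rpow_add h0, ← rpow_add h0,
    ← rpow_add h0, ← rpow_add h0]
  rw [show q + (q - p - 2*κ) = 2*q - p - 2*κ by ring,
    show -q + (q - p - 2*κ) = -p - 2*κ by ring,
    show p + κ + -κ = p by ring,
    show -(p + κ) + -κ = -p - 2*κ by ring,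
    show q - κ + (q - p - κ) = 2*q - p - 2*κ by ring,
    show -(q - κ) + (q - p - κ) = -p by ring]
  ring

lemma cc_key {x r : ℝ} (h0 : 0 < x) (i j : ℕ) (k : ℤ)
    (hik : 1 ≤ (i:ℤ) - k) (hjk : 1 ≤ (j:ℤ) + k) (m : ℕ) :
    cc x r i m + cc x r j m * ((x ^ ((i:ℤ) - j - 2*k)) ^ (m+1))
      = cc x r ((i:ℤ) - k).toNat m * ((x ^ (-k)) ^ (m+1))
        + cc x r ((j:ℤ) + k).toNat m * ((x ^ ((i:ℤ) - j - k)) ^ (m+1)) := by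
  have hz : ∀ e : ℤ, (x ^ e) ^ (m+1) = x ^ (((e:ℤ):ℝ) * ((m:ℝ)+1)) := by
    intro e
    rw [← rpow_intCast x e, ← rpow_natCast (x ^ ((e:ℤ):ℝ)) (m+1), ← rpow_mul h0.le]
    congr 1
    push_cast
    ring
  have hti : ((((i:ℤ) - k).toNat : ℕ) : ℝ) = (i:ℝ) - (k:ℝ) := by
    have h := Int.toNat_of_nonneg (by omega : (0:ℤ) ≤ (i:ℤ) - k)
    exact_mod_cast congrArg (fun z : ℤ => (z : ℝ)) h
  have htj : ((((j:ℤ) + k).toNat : ℕ) : ℝ) = (j:ℝ) + (k:ℝ) := by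
    have h := Int.toNat_of_nonneg (by omega : (0:ℤ) ≤ (j:ℤ) + k)
    exact_mod_cast congrArg (fun z : ℤ => (z : ℝ)) h
  have hcc : ∀ t : ℕ, cc x r t m = qint x ((r + 1 - (t:ℝ)) * ((m:ℝ)+1)) *
      (qint x ((r-1)*((m:ℝ)+1)) * qint x (r*((m:ℝ)+1)) / qint x ((r+1)*((m:ℝ)+1))
        * (x - x⁻¹)^2) := by
    intro t
    unfold cc
    ring
  have hz1 : (x ^ ((i:ℤ) - j - 2*k)) ^ (m+1)
      = x ^ ((r+1-(j:ℝ))*((m:ℝ)+1) - (r+1-(i:ℝ))*((m:ℝ)+1) - 2*((k:ℝ)*((m:ℝ)+1))) := by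
    rw [hz]; congr 1; push_cast; ring
  have hz2 : (x ^ (-k)) ^ (m+1) = x ^ (-((k:ℝ)*((m:ℝ)+1))) := by
    rw [hz]; congr 1; push_cast; ring
  have hz3 : (x ^ ((i:ℤ) - j - k)) ^ (m+1)
      = x ^ ((r+1-(j:ℝ))*((m:ℝ)+1) - (r+1-(i:ℝ))*((m:ℝ)+1) - (k:ℝ)*((m:ℝ)+1)) := by
    rw [hz]; congr 1; push_cast; ring
  have hq1' : qint x ((r + 1 - ((((i:ℤ) - k).toNat : ℕ):ℝ)) * ((m:ℝ)+1))
      = qint x ((r+1-(i:ℝ))*((m:ℝ)+1) + (k:ℝ)*((m:ℝ)+1)) := by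
    rw [hti]; congr 1; ring
  have hq2' : qint x ((r + 1 - ((((j:ℤ) + k).toNat : ℕ):ℝ)) * ((m:ℝ)+1))
      = qint x ((r+1-(j:ℝ))*((m:ℝ)+1) - (k:ℝ)*((m:ℝ)+1)) := by
    rw [htj]; congr 1; ring
  have h := qint_key h0 ((r+1-(i:ℝ))*((m:ℝ)+1)) ((r+1-(j:ℝ))*((m:ℝ)+1)) ((k:ℝ)*((m:ℝ)+1))
  rw [hcc i, hcc j, hcc (((i:ℤ) - k).toNat), hcc (((j:ℤ) + k).toNat), hz1, hz2, hz3, hq1', hq2']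
  linear_combination h * (qint x ((r-1)*((m:ℝ)+1)) * qint x (r*((m:ℝ)+1))
    / qint x ((r+1)*((m:ℝ)+1)) * (x - x⁻¹)^2)

lemma cc_bound {x r : ℝ} (h0 : 0 < x) (h1 : x < 1) (hr : 1 < r) (t : ℕ) :
    ∃ K ρ : ℝ, 0 < K ∧ 0 < ρ ∧ ∀ m : ℕ, |cc x r t m| ≤ K * ρ ^ (m+1) := by
  have hw := hw_pos h0 h1
  have hx2 : 0 < 1 - x ^ 2 := by nlinarith
  set B : ℝ := |r-1| + |r| + |r+1-(t:ℝ)| - (r+1) with hB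
  refine ⟨8/(1-x^2), x ^ (-B), by positivity, rpow_pos_of_pos h0 _, ?_⟩
  intro m
  have hn0 : (0:ℝ) < (m:ℝ)+1 := by positivity
  have hn1 : (1:ℝ) ≤ (m:ℝ)+1 := by
    have : (0:ℝ) ≤ (m:ℝ) := Nat.cast_nonneg m
    linarith
  have harg : (1:ℝ) ≤ (r+1)*((m:ℝ)+1) := by nlinarith
  have hq4 : 0 < qint x ((r+1)*((m:ℝ)+1)) := qint_pos h0 h1 (by nlinarith)
  have hq4low := qint_lower h0 h1 harg
  have hq4lowpos := qint_lower_pos h0 h1 (x := x) harg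
  have ha1 := qint_abs_le h0 h1 ((r-1)*((m:ℝ)+1))
  have ha2 := qint_abs_le h0 h1 (r*((m:ℝ)+1))
  have ha3 := qint_abs_le h0 h1 ((r+1-(t:ℝ))*((m:ℝ)+1))
  rw [abs_mul, abs_of_pos hn0] at ha1 ha2 ha3
  have habs : |cc x r t m|
      = |qint x ((r-1)*((m:ℝ)+1))| * |qint x (r*((m:ℝ)+1))|
          * |qint x ((r+1-(t:ℝ))*((m:ℝ)+1))| / qint x ((r+1)*((m:ℝ)+1)) * (x⁻¹-x)^2 := by
    unfold cc
    rw [abs_mul, abs_div, abs_mul, abs_mul, abs_of_pos hq4,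
      show ((x:ℝ) - x⁻¹)^2 = (x⁻¹-x)^2 by ring, abs_of_nonneg (sq_nonneg (x⁻¹ - x))]
  have step1 : |cc x r t m|
      ≤ (2 * x ^ (-(|r - 1| * ((m:ℝ)+1))) / (x⁻¹-x)) * (2 * x ^ (-(|r| * ((m:ℝ)+1))) / (x⁻¹-x))
          * (2 * x ^ (-(|r + 1 - (t:ℝ)| * ((m:ℝ)+1))) / (x⁻¹-x))
          / (x ^ (-((r+1)*((m:ℝ)+1))) * (1-x^2) / (x⁻¹-x)) * (x⁻¹-x)^2 := by
    rw [habs]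
    gcongr
    all_goals first
      | exact hq4lowpos
      | exact ha1
      | exact ha2
      | exact ha3
      | exact hq4low
      | positivity
  refine step1.trans (le_of_eq ?_)
  have hprod : x ^ (-(|r - 1| * ((m:ℝ)+1))) * x ^ (-(|r| * ((m:ℝ)+1)))
      * x ^ (-(|r + 1 - (t:ℝ)| * ((m:ℝ)+1))) / x ^ (-((r+1)*((m:ℝ)+1)))
      = x ^ (-B*((m:ℝ)+1)) := by
    rw [← rpow_add h0, ← rpow_add h0, ← rpow_sub h0]
    congr 1
    rw [hB]
    ring
  have hpow : x ^ (-B*((m:ℝ)+1)) = (x ^ (-B)) ^ (m+1) := by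
    rw [← rpow_natCast (x ^ (-B)) (m+1), ← rpow_mul h0.le]
    congr 1
    push_cast
    ring
  have hne1 : x ^ (-((r+1)*((m:ℝ)+1))) ≠ 0 := (rpow_pos_of_pos h0 _).ne'
  have hgen : ∀ a b c d w e : ℝ, w ≠ 0 → d ≠ 0 → e ≠ 0 →
      (2*a/w)*(2*b/w)*(2*c/w)/(d*e/w)*w^2 = 8/e*(a*b*c/d) := by
    intros a b c d w e hwne hdne hene
    field_simp
    ring
  rw [← hpow, ← hprod]
  exact hgen _ _ _ _ _ _ hw.ne' hne1 hx2.ne'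

lemma summ_aux {c : ℕ → ℝ} {K ρ : ℝ} (hK : 0 < K) (hρ : 0 < ρ)
    (hc : ∀ m, |c m| ≤ K * ρ ^ (m+1)) (z : ℂ) (hz : ‖z‖ < ρ⁻¹) :
    Summable (fun m : ℕ => ((c m : ℝ) : ℂ) * z ^ (m+1) / ((m:ℂ)+1)) := by
  apply Summable.of_norm
  have hq : ρ * ‖z‖ < 1 := by
    have := mul_lt_mul_of_pos_left hz hρ
    rwa [mul_inv_cancel₀ hρ.ne'] at this
  have hq0 : (0:ℝ) ≤ ρ * ‖z‖ := by positivity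
  refine Summable.of_nonneg_of_le (fun m => norm_nonneg _) (fun m => ?_)
    ((summable_geometric_of_lt_one hq0 hq).mul_left (K * (ρ * ‖z‖)))
  rw [norm_div, norm_mul, Complex.norm_real, Real.norm_eq_abs, norm_pow]
  have hm1 : (1:ℝ) ≤ ‖((m:ℂ)+1)‖ := by
    have h : ((m:ℂ)+1) = ((m+1 : ℕ):ℂ) := by push_cast; ring
    rw [h, Complex.norm_natCast]
    exact_mod_cast Nat.succ_le_succ (Nat.zero_le m)
  have hle : |c m| * ‖z‖^(m+1) ≤ K * (ρ * ‖z‖) * (ρ * ‖z‖)^m := by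
    have h2 : |c m| * ‖z‖^(m+1) ≤ (K * ρ^(m+1)) * ‖z‖^(m+1) :=
      mul_le_mul_of_nonneg_right (hc m) (by positivity)
    refine h2.trans (le_of_eq ?_)
    rw [mul_assoc, ← mul_pow, pow_succ]
    ring
  exact (div_le_self (by positivity) hm1).trans hle

/-- `f_{1,i}(z) f_{1,j}(x^{i-j-2k} z) = f_{1,i-k}(x^{-k} z) f_{1,j+k}(x^{i-j-k} z)`
for `i, j ≥ 1` and `k ∈ ℤ` with `i - k ≥ 1`, `j + k ≥ 1`. -/
theorem f_fusion_shift (x : ℝ) (hx0 : 0 < x) (hx1 : x < 1) (r : ℝ) (hr : 1 < r)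
    (i j : ℕ) (hi : 1 ≤ i) (hj : 1 ≤ j) (k : ℤ)
    (hik : 1 ≤ (i : ℤ) - k) (hjk : 1 ≤ (j : ℤ) + k) :
    ∃ ε > 0, ∀ z : ℂ, ‖z‖ < ε →
      ff x r 1 i z * ff x r 1 j (((x ^ ((i : ℤ) - j - 2 * k) : ℝ) : ℂ) * z)
        = ff x r 1 ((i : ℤ) - k).toNat (((x ^ (-k) : ℝ) : ℂ) * z)
            * ff x r 1 ((j : ℤ) + k).toNat (((x ^ ((i : ℤ) - j - k) : ℝ) : ℂ) * z) := by
  have hi' : 1 ≤ ((i:ℤ) - k).toNat := by omega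
  have hj' : 1 ≤ ((j:ℤ) + k).toNat := by omega
  obtain ⟨K1, ρ1, hK1, hρ1, hb1⟩ := cc_bound (r := r) hx0 hx1 hr i
  obtain ⟨K2, ρ2, hK2, hρ2, hb2⟩ := cc_bound (r := r) hx0 hx1 hr j
  obtain ⟨K3, ρ3, hK3, hρ3, hb3⟩ := cc_bound (r := r) hx0 hx1 hr ((i:ℤ) - k).toNat
  obtain ⟨K4, ρ4, hK4, hρ4, hb4⟩ := cc_bound (r := r) hx0 hx1 hr ((j:ℤ) + k).toNat
  have hc1 : (0:ℝ) < x ^ ((i:ℤ) - j - 2 * k) := zpow_pos hx0 _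
  have hc2 : (0:ℝ) < x ^ (-k) := zpow_pos hx0 _
  have hc3 : (0:ℝ) < x ^ ((i:ℤ) - j - k) := zpow_pos hx0 _
  refine ⟨min (min ρ1⁻¹ (ρ2⁻¹ / x ^ ((i:ℤ) - j - 2 * k)))
      (min (ρ3⁻¹ / x ^ (-k)) (ρ4⁻¹ / x ^ ((i:ℤ) - j - k))), by positivity, ?_⟩
  intro z hz
  have hz1 : ‖z‖ < ρ1⁻¹ := hz.trans_le ((min_le_left _ _).trans (min_le_left _ _))
  have hnorm : ∀ e : ℤ, ‖((x ^ e : ℝ) : ℂ) * z‖ = x ^ e * ‖z‖ := by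
    intro e
    rw [norm_mul, Complex.norm_real, Real.norm_eq_abs, abs_of_pos (zpow_pos hx0 e)]
  have hz2 : ‖((x ^ ((i:ℤ) - j - 2 * k) : ℝ) : ℂ) * z‖ < ρ2⁻¹ := by
    rw [hnorm]
    have h := hz.trans_le ((min_le_left _ _).trans (min_le_right _ _))
    calc x ^ ((i:ℤ) - j - 2 * k) * ‖z‖
        < x ^ ((i:ℤ) - j - 2 * k) * (ρ2⁻¹ / x ^ ((i:ℤ) - j - 2 * k)) := by
          exact mul_lt_mul_of_pos_left h hc1
      _ = ρ2⁻¹ := by field_simp; try ring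
  have hz3 : ‖((x ^ (-k) : ℝ) : ℂ) * z‖ < ρ3⁻¹ := by
    rw [hnorm]
    have h := hz.trans_le ((min_le_right _ _).trans (min_le_left _ _))
    calc x ^ (-k) * ‖z‖ < x ^ (-k) * (ρ3⁻¹ / x ^ (-k)) := mul_lt_mul_of_pos_left h hc2
      _ = ρ3⁻¹ := by field_simp; try ring
  have hz4 : ‖((x ^ ((i:ℤ) - j - k) : ℝ) : ℂ) * z‖ < ρ4⁻¹ := by
    rw [hnorm]
    have h := hz.trans_le ((min_le_right _ _).trans (min_le_right _ _))
    calc x ^ ((i:ℤ) - j - k) * ‖z‖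
        < x ^ ((i:ℤ) - j - k) * (ρ4⁻¹ / x ^ ((i:ℤ) - j - k)) := mul_lt_mul_of_pos_left h hc3
      _ = ρ4⁻¹ := by field_simp; try ring
  have hs1 := summ_aux hK1 hρ1 hb1 z hz1
  have hs2 := summ_aux hK2 hρ2 hb2 _ hz2
  have hs3 := summ_aux hK3 hρ3 hb3 _ hz3
  have hs4 := summ_aux hK4 hρ4 hb4 _ hz4
  rw [ff_eq hx0 hx1 hr i hi z, ff_eq hx0 hx1 hr j hj _, ff_eq hx0 hx1 hr _ hi' _,
    ff_eq hx0 hx1 hr _ hj' _, ← Complex.exp_add, ← Complex.exp_add, ← neg_add, ← neg_add]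
  congr 2
  rw [← Summable.tsum_add hs1 hs2, ← Summable.tsum_add hs3 hs4]
  refine tsum_congr fun m => ?_
  have key := cc_key (r := r) hx0 i j k hik hjk m
  have keyC : ((cc x r i m : ℝ):ℂ) + ((cc x r j m : ℝ):ℂ) * ((x ^ ((i:ℤ) - j - 2*k) : ℝ):ℂ)^(m+1)
      = ((cc x r ((i:ℤ) - k).toNat m : ℝ):ℂ) * ((x ^ (-k) : ℝ):ℂ)^(m+1)
        + ((cc x r ((j:ℤ) + k).toNat m : ℝ):ℂ) * ((x ^ ((i:ℤ) - j - k) : ℝ):ℂ)^(m+1) := by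
    exact_mod_cast key
  rw [mul_pow, mul_pow, mul_pow, ← add_div, ← add_div]
  congr 1
  linear_combination z ^ (m+1) * keyC
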